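/- Let (Ω, P) be a probability space, X : Ω → ℝ^d and Z : Ω → ℝ^m independent square-integrable random vectors whose covariance matrices are the identity matrices I_d and I_m respectively. Let β_g ∈ ℝ^d and β_h ∈ ℝ^m and set g(x) = ⟨β_g, x⟩ and h(z) = ⟨β_h, z⟩. Then: (i) Var[g(X) + E[h(Z) | σ(X)]] = ‖β_g‖₂², and (ii) for each j ∈ {1,…,m}, Cov(Z_j, h(Z) − E[h(Z) | σ(X)]) = (β_h)_j, so the adjustment coefficient γ satisfies ‖γ‖₂² = ‖β_h‖₂². Here E[· | σ(X)] denotes the conditional expectation with respect to the σ-algebra generated by X. -/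

import Mathlib

set_option linter.unusedSectionVars false
open MeasureTheory ProbabilityTheory

variable {Ω : Type} [MeasurableSpace Ω] {P : Measure Ω} [IsProbabilityMeasure P]

lemma int_mul {f g : Ω → ℝ} (hf : MemLp f 2 P) (hg : MemLp g 2 P) :
    Integrable (fun ω => f ω * g ω) P := by
  have := hf.smul (r := 1) hg
  rw [memLp_one_iff_integrable] at this
  simpa [smul_eq_mul, mul_comm, Pi.mul_def] using this

lemma memLp_sum {n : ℕ} (W : Ω → Fin n → ℝ) (hW2 : ∀ i, MemLp (fun ω => W ω i) 2 P)
    (β : Fin n → ℝ) : MemLp (fun ω => ∑ i, β i * W ω i) 2 P := by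
  rw [show (fun ω => ∑ i, β i * W ω i) = ∑ i, (fun ω => β i * W ω i) from by
    ext ω; simp]
  exact memLp_finsetSum' Finset.univ (fun i _ => (hW2 i).const_mul (β i))

lemma cov_lin {n : ℕ} (W : Ω → Fin n → ℝ) (hW2 : ∀ i, MemLp (fun ω => W ω i) 2 P)
    (hcov : ∀ i i' : Fin n,
      (∫ ω, W ω i * W ω i' ∂P) - (∫ ω, W ω i ∂P) * (∫ ω, W ω i' ∂P) =
        if i = i' then 1 else 0)
    (β : Fin n → ℝ) (j : Fin n) :
    (∫ ω, W ω j * (∑ i, β i * W ω i) ∂P) -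
      (∫ ω, W ω j ∂P) * (∫ ω, ∑ i, β i * W ω i ∂P) = β j := by
  have h1 : (∫ ω, W ω j * (∑ i, β i * W ω i) ∂P)
      = ∑ i, β i * ∫ ω, W ω j * W ω i ∂P := by
    have : ∀ ω, W ω j * (∑ i, β i * W ω i) = ∑ i, β i * (W ω j * W ω i) := by
      intro ω; rw [Finset.mul_sum]; congr 1; ext i; ring
    simp_rw [this]
    rw [integral_finset_sum _ (fun i _ => (int_mul (hW2 j) (hW2 i)).const_mul (β i))]
    simp_rw [integral_const_mul]
  have h2 : (∫ ω, ∑ i, β i * W ω i ∂P) = ∑ i, β i * ∫ ω, W ω i ∂P := by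
    rw [integral_finset_sum _ (fun i _ =>
      ((hW2 i).integrable (by norm_num)).const_mul (β i))]
    simp_rw [integral_const_mul]
  rw [h1, h2, Finset.mul_sum, ← Finset.sum_sub_distrib]
  have : ∀ i, β i * ∫ ω, W ω j * W ω i ∂P - (∫ ω, W ω j ∂P) * (β i * ∫ ω, W ω i ∂P)
      = β i * (if j = i then 1 else 0) := by
    intro i; rw [← hcov j i]; ring
  simp_rw [this]
  simp

lemma var_lin {n : ℕ} (W : Ω → Fin n → ℝ) (hW2 : ∀ i, MemLp (fun ω => W ω i) 2 P)
    (hcov : ∀ i i' : Fin n,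
      (∫ ω, W ω i * W ω i' ∂P) - (∫ ω, W ω i ∂P) * (∫ ω, W ω i' ∂P) =
        if i = i' then 1 else 0)
    (β : Fin n → ℝ) :
    (∫ ω, (∑ i, β i * W ω i) ^ 2 ∂P) - (∫ ω, ∑ i, β i * W ω i ∂P) ^ 2 =
      ∑ i, β i ^ 2 := by
  set S : Ω → ℝ := fun ω => ∑ i, β i * W ω i with hS
  have hS2 : MemLp S 2 P := memLp_sum W hW2 β
  have h1 : (∫ ω, S ω ^ 2 ∂P) = ∑ j, β j * ∫ ω, W ω j * S ω ∂P := by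
    have : ∀ ω, S ω ^ 2 = ∑ j, β j * (W ω j * S ω) := by
      intro ω; rw [pow_two, hS]; rw [Finset.sum_mul]; congr 1; ext j; ring
    simp_rw [this]
    rw [integral_finset_sum _ (fun j _ => (int_mul (hW2 j) hS2).const_mul (β j))]
    simp_rw [integral_const_mul]
  have h2 : (∫ ω, S ω ∂P) = ∑ j, β j * ∫ ω, W ω j ∂P := by
    rw [hS, integral_finset_sum _ (fun i _ =>
      ((hW2 i).integrable (by norm_num)).const_mul (β i))]
    simp_rw [integral_const_mul]
  calc (∫ ω, S ω ^ 2 ∂P) - (∫ ω, S ω ∂P) ^ 2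
      = ∑ j, β j * ((∫ ω, W ω j * S ω ∂P) - (∫ ω, W ω j ∂P) * (∫ ω, S ω ∂P)) := by
        rw [h1, pow_two]; nth_rewrite 2 [h2]
        rw [Finset.mul_sum, ← Finset.sum_sub_distrib]
        congr 1; ext j; ring
    _ = ∑ j, β j * β j := by
        congr 1; ext j; rw [cov_lin W hW2 hcov β j]
    _ = ∑ j, β j ^ 2 := by simp [pow_two]

theorem stmt_14 {Ω : Type} [MeasurableSpace Ω]
    (P : Measure Ω) [IsProbabilityMeasure P]
    {d m : ℕ} (X : Ω → (Fin d → ℝ)) (Z : Ω → (Fin m → ℝ))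
    (hXm : Measurable X) (hZm : Measurable Z)
    (hindep : IndepFun X Z P)
    (hX2 : ∀ i, MemLp (fun ω => X ω i) 2 P)
    (hZ2 : ∀ j, MemLp (fun ω => Z ω j) 2 P)
    (hXcov : ∀ i i' : Fin d,
      (∫ ω, X ω i * X ω i' ∂P) - (∫ ω, X ω i ∂P) * (∫ ω, X ω i' ∂P) =
        if i = i' then 1 else 0)
    (hZcov : ∀ j j' : Fin m,
      (∫ ω, Z ω j * Z ω j' ∂P) - (∫ ω, Z ω j ∂P) * (∫ ω, Z ω j' ∂P) =
        if j = j' then 1 else 0)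
    (βg : Fin d → ℝ) (βh : Fin m → ℝ)
    (g : (Fin d → ℝ) → ℝ) (h : (Fin m → ℝ) → ℝ)
    (hgdef : ∀ x, g x = ∑ i, βg i * x i)
    (hhdef : ∀ z, h z = ∑ j, βh j * z j)
    (γ : Fin m → ℝ)
    (hγ : ∀ j, γ j =
      (∫ ω, Z ω j * (h (Z ω) -
        (P[(fun ω' => h (Z ω')) | MeasurableSpace.comap X inferInstance]) ω) ∂P) -
      (∫ ω, Z ω j ∂P) *
      (∫ ω, (h (Z ω) -
        (P[(fun ω' => h (Z ω')) | MeasurableSpace.comap X inferInstance]) ω) ∂P)) :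
    ((∫ ω, (g (X ω) +
        (P[(fun ω' => h (Z ω')) | MeasurableSpace.comap X inferInstance]) ω) ^ 2 ∂P) -
      (∫ ω, (g (X ω) +
        (P[(fun ω' => h (Z ω')) | MeasurableSpace.comap X inferInstance]) ω) ∂P) ^ 2 =
      ∑ i, βg i ^ 2) ∧
    (∀ j, γ j = βh j) ∧
    (∑ j, γ j ^ 2 = ∑ j, βh j ^ 2) := by
  -- notation
  set f : Ω → ℝ := P[(fun ω' => h (Z ω')) | MeasurableSpace.comap X inferInstance] with hf
  set c : ℝ := ∫ ω, h (Z ω) ∂P with hc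
  have hle₁ : MeasurableSpace.comap Z inferInstance ≤ (inferInstance : MeasurableSpace Ω) :=
    hZm.comap_le
  have hle₂ : MeasurableSpace.comap X inferInstance ≤ (inferInstance : MeasurableSpace Ω) :=
    hXm.comap_le
  haveI : SigmaFinite (P.trim hle₂) := by
    haveI := isFiniteMeasure_trim hle₂ (μ := P)
    infer_instance
  -- h(Z) is comap-Z strongly measurable
  have hZmeas : Measurable[MeasurableSpace.comap Z inferInstance] Z :=
    fun s hs => ⟨s, hs, rfl⟩
  have hhZsm : StronglyMeasurable[MeasurableSpace.comap Z inferInstance]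
      (fun ω => h (Z ω)) := by
    have : Measurable[MeasurableSpace.comap Z inferInstance] (fun ω => h (Z ω)) := by
      simp_rw [hhdef]
      exact Finset.measurable_sum _ (fun j _ =>
        ((measurable_pi_apply j).comp hZmeas).const_mul (βh j))
    exact this.stronglyMeasurable
  have hindp : Indep (MeasurableSpace.comap Z inferInstance)
      (MeasurableSpace.comap X inferInstance) P :=
    (IndepFun_iff_Indep Z X P).mp hindep.symm
  have hce : f =ᵐ[P] fun _ => c :=
    condExp_indep_eq hle₁ hle₂ hhZsm hindp
  -- hZ as a linear combination
  have hhZc : c = ∫ ω, ∑ j, βh j * Z ω j ∂P := by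
    rw [hc]; congr 1; ext ω; rw [hhdef]
  -- Part 1
  have part1 : (∫ ω, (g (X ω) + f ω) ^ 2 ∂P) - (∫ ω, (g (X ω) + f ω) ∂P) ^ 2 =
      ∑ i, βg i ^ 2 := by
    set S : Ω → ℝ := fun ω => ∑ i, βg i * X ω i with hSdef
    have hS2 : MemLp S 2 P := memLp_sum X hX2 βg
    have hSint : Integrable S P := hS2.integrable (by norm_num)
    have hSsqint : Integrable (fun ω => S ω ^ 2) P := by
      simp_rw [pow_two]; exact int_mul hS2 hS2
    have e1 : (∫ ω, (g (X ω) + f ω) ^ 2 ∂P) = ∫ ω, (S ω + c) ^ 2 ∂P := by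
      refine integral_congr_ae (hce.mono fun ω hω => ?_)
      dsimp only at hω ⊢; rw [hω, hgdef]
    have e2 : (∫ ω, (g (X ω) + f ω) ∂P) = ∫ ω, (S ω + c) ∂P := by
      refine integral_congr_ae (hce.mono fun ω hω => ?_)
      dsimp only at hω ⊢; rw [hω, hgdef]
    have e3 : (∫ ω, (S ω + c) ^ 2 ∂P)
        = (∫ ω, S ω ^ 2 ∂P) + (2 * c) * (∫ ω, S ω ∂P) + c ^ 2 := by
      have : ∀ ω, (S ω + c) ^ 2 = S ω ^ 2 + (2 * c) * S ω + c ^ 2 := fun ω => by ring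
      simp_rw [this]
      have i2 : Integrable (fun ω => 2 * c * S ω) P := hSint.const_mul (2 * c)
      have i1 : Integrable (fun ω => S ω ^ 2 + 2 * c * S ω) P := hSsqint.add i2
      rw [integral_add i1 (integrable_const _), integral_add hSsqint i2,
        integral_const_mul, integral_const]
      simp
    have e4 : (∫ ω, (S ω + c) ∂P) = (∫ ω, S ω ∂P) + c := by
      rw [integral_add hSint (integrable_const _), integral_const]; simp
    rw [e1, e2, e3, e4]
    have := var_lin X hX2 hXcov βg
    rw [← hSdef] at this  -- no-op
    nlinarith [this]
  have part2 : ∀ j, γ j = βh j := by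
    intro j
    set S : Ω → ℝ := fun ω => ∑ j', βh j' * Z ω j' with hSdef
    have hS2 : MemLp S 2 P := memLp_sum Z hZ2 βh
    have hSint : Integrable S P := hS2.integrable (by norm_num)
    have hZjint : Integrable (fun ω => Z ω j) P := (hZ2 j).integrable (by norm_num)
    have hprod : Integrable (fun ω => Z ω j * S ω) P := int_mul (hZ2 j) hS2
    have e1 : (∫ ω, Z ω j * (h (Z ω) - f ω) ∂P) = ∫ ω, Z ω j * (S ω - c) ∂P := by
      refine integral_congr_ae (hce.mono fun ω hω => ?_)
      dsimp only at hω ⊢; rw [hω, hhdef]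
    have e2 : (∫ ω, (h (Z ω) - f ω) ∂P) = ∫ ω, (S ω - c) ∂P := by
      refine integral_congr_ae (hce.mono fun ω hω => ?_)
      dsimp only at hω ⊢; rw [hω, hhdef]
    have e3 : (∫ ω, Z ω j * (S ω - c) ∂P)
        = (∫ ω, Z ω j * S ω ∂P) - c * (∫ ω, Z ω j ∂P) := by
      have : ∀ ω, Z ω j * (S ω - c) = Z ω j * S ω - c * Z ω j := fun ω => by ring
      simp_rw [this]
      have i2 : Integrable (fun ω => c * Z ω j) P := hZjint.const_mul c
      rw [integral_sub hprod i2, integral_const_mul]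
    have e4 : (∫ ω, (S ω - c) ∂P) = 0 := by
      rw [integral_sub hSint (integrable_const _), integral_const, hhZc]
      simp
    have hcS : c = ∫ ω, S ω ∂P := hhZc
    rw [hγ j, e1, e2, e3, e4, hcS, mul_zero, sub_zero]
    have := cov_lin Z hZ2 hZcov βh j
    linarith [this]
  exact ⟨part1, part2, by simp_rw [part2]⟩
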